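/- There is an involution v ↦ u on the set of permutations of [n] with pix = j such that lec(u) = n − j − lec(v) and inv(u) − lec(u) = inv(v) − lec(v). -/

import Mathlib

namespace QEuler

/-- inversion number of a word -/
def invL : List ℕ → ℕ
  | [] => 0
  | a :: l => l.countP (fun b => decide (b < a)) + invL l

/-- descent set positions (1-indexed) of a word -/
def descSet (w : List ℕ) : List ℕ :=
  (List.range (w.length - 1)).filter (fun i => decide (w.getD (i+1) 0 < w.getD i 0))

def desL (w : List ℕ) : ℕ := (descSet w).length

def majL (w : List ℕ) : ℕ := ((descSet w).map (· + 1)).sum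

def IncreasingL (w : List ℕ) : Prop := w.Chain' (· < ·)

def IsHook (w : List ℕ) : Prop :=
  2 ≤ w.length ∧ w.getD 1 0 < w.getD 0 0 ∧ w.tail.Chain' (· < ·)

def lastDesc (w : List ℕ) : Option ℕ := (descSet w).max?

/-- hook factorization: increasing prefix and list of hooks -/
def hookAux : ℕ → List ℕ → List ℕ × List (List ℕ)
  | 0, w => (w, [])
  | fuel+1, w =>
    match lastDesc w with
    | none => (w, [])
    | some i =>
      let r := hookAux fuel (w.take i)
      (r.1, r.2 ++ [w.drop i])

def hookFact (w : List ℕ) : List ℕ × List (List ℕ) := hookAux w.length w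

def pixL (w : List ℕ) : ℕ := (hookFact w).1.length

def lecL (w : List ℕ) : ℕ := ((hookFact w).2.map invL).sum

/-- rightmost index of the maximum letter -/
def rmax (w : List ℕ) : ℕ := (w.length - 1) - (w.reverse.idxOf (w.foldr max 0))

def rixAux : ℕ → List ℕ → ℕ
  | 0, _ => 0
  | fuel+1, w =>
    if w = [] then 0
    else
      let i := rmax w
      if i + 1 = w.length then 1 + rixAux fuel (w.take (w.length - 1))
      else if i = 0 then 0
      else rixAux fuel (w.drop (i+1))

def rixL (w : List ℕ) : ℕ := rixAux w.length w

/-- admissible inversions of a word (0-indexed pairs) -/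
def aiL (w : List ℕ) : ℕ :=
  ((Finset.range w.length ×ˢ Finset.range w.length).filter
    (fun p => p.1 < p.2 ∧ w.getD p.2 0 < w.getD p.1 0 ∧
      ((0 < p.1 ∧ w.getD (p.1 - 1) 0 < w.getD p.1 0) ∨
        ∃ l ∈ Finset.Ioo p.1 p.2, w.getD p.1 0 < w.getD l 0))).card

/-- the word π(1)π(2)⋯π(n) of a permutation, with letters in {1,…,n} -/
def word {n : ℕ} (π : Equiv.Perm (Fin n)) : List ℕ := List.ofFn (fun i => (π i : ℕ) + 1)

def des {n : ℕ} (π : Equiv.Perm (Fin n)) : ℕ := desL (word π)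
def maj {n : ℕ} (π : Equiv.Perm (Fin n)) : ℕ := majL (word π)
def inv {n : ℕ} (π : Equiv.Perm (Fin n)) : ℕ := invL (word π)
def lec {n : ℕ} (π : Equiv.Perm (Fin n)) : ℕ := lecL (word π)
def pix {n : ℕ} (π : Equiv.Perm (Fin n)) : ℕ := pixL (word π)
def rix {n : ℕ} (π : Equiv.Perm (Fin n)) : ℕ := rixL (word π)
def ai  {n : ℕ} (π : Equiv.Perm (Fin n)) : ℕ := aiL (word π)

def exc {n : ℕ} (π : Equiv.Perm (Fin n)) : ℕ :=
  (Finset.univ.filter (fun i : Fin n => (i : ℕ) < (π i : ℕ))).card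

def fixp {n : ℕ} (π : Equiv.Perm (Fin n)) : ℕ :=
  (Finset.univ.filter (fun i : Fin n => π i = i)).card

/-- (q;q)_n -/
noncomputable def qq (n : ℕ) : Polynomial ℚ :=
  ∏ i ∈ Finset.range n, (1 - Polynomial.X ^ (i+1))

/-- the q-binomial coefficient -/
noncomputable def qbinom (n k : ℕ) : Polynomial ℚ :=
  if k ≤ n then qq n / (qq (n-k) * qq k) else 0


instance : DecidablePred IncreasingL :=
  fun w => inferInstanceAs (Decidable (w.IsChain (· < ·)))

/-- `(maj−exc,exc)` q-Eulerian numbers `A_{n,k}(q)` -/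
noncomputable def Amaj (n k : ℕ) : Polynomial ℚ :=
  ∑ π ∈ Finset.univ.filter (fun π : Equiv.Perm (Fin n) => exc π = k),
    Polynomial.X ^ (maj π - exc π)

/-- fixed point q-Eulerian numbers `A_{n,k}^{(j)}(q)` via `(maj−exc,exc,fix)` -/
noncomputable def Amajfix (n k j : ℕ) : Polynomial ℚ :=
  ∑ π ∈ Finset.univ.filter (fun π : Equiv.Perm (Fin n) => exc π = k ∧ fixp π = j),
    Polynomial.X ^ (maj π - exc π)

/-- q-Eulerian numbers via `(inv−lec,lec)` -/
noncomputable def Alec (n k : ℕ) : Polynomial ℚ :=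
  ∑ π ∈ Finset.univ.filter (fun π : Equiv.Perm (Fin n) => lec π = k),
    Polynomial.X ^ (inv π - lec π)

/-- fixed point q-Eulerian numbers via `(inv−lec,lec,pix)` -/
noncomputable def Alecpix (n k j : ℕ) : Polynomial ℚ :=
  ∑ π ∈ Finset.univ.filter (fun π : Equiv.Perm (Fin n) => lec π = k ∧ pix π = j),
    Polynomial.X ^ (inv π - lec π)


/-! ### Auxiliary lemmas -/

lemma nat_max?_some_iff {l : List ℕ} {a : ℕ} :
    l.max? = some a ↔ a ∈ l ∧ ∀ b ∈ l, b ≤ a :=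
  List.max?_eq_some_iff

lemma mem_descSet {w : List ℕ} {i : ℕ} :
    i ∈ descSet w ↔ i + 1 < w.length ∧ w.getD (i+1) 0 < w.getD i 0 := by
  rw [descSet, List.mem_filter, List.mem_range, decide_eq_true_iff]
  constructor <;> rintro ⟨h1, h2⟩ <;> exact ⟨by omega, h2⟩

lemma descSet_eq_nil {w : List ℕ} (h : List.Chain' (· < ·) w) : descSet w = [] := by
  rw [descSet, List.filter_eq_nil_iff]
  intro i hi
  rw [List.mem_range] at hi
  have h2 : i + 1 < w.length := by omega
  have := List.isChain_iff_getElem.1 h i (by omega)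
  rw [decide_eq_true_iff, List.getD_eq_getElem _ _ h2, List.getD_eq_getElem _ _ (by omega)]
  omega

lemma lt_of_not_desc {w : List ℕ} (hnd : w.Nodup) {j : ℕ} (hj : j + 1 < w.length)
    (h : j ∉ descSet w) : w.getD j 0 < w.getD (j+1) 0 := by
  rw [mem_descSet] at h
  push_neg at h
  have h1 := h hj
  rw [List.getD_eq_getElem _ _ hj, List.getD_eq_getElem _ _ (by omega)] at *
  have hne : w[j+1] ≠ w[j] := by
    intro e; have := hnd.getElem_inj_iff.1 e; omega
  omega

lemma chain'_of_no_desc {w : List ℕ} (hnd : w.Nodup) (h : descSet w = []) :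
    List.Chain' (· < ·) w := by
  show List.IsChain _ _
  rw [List.isChain_iff_getElem]
  intro i hi
  have h2 : i + 1 < w.length := by omega
  have := lt_of_not_desc hnd h2 (by rw [h]; exact List.not_mem_nil)
  rwa [List.getD_eq_getElem _ _ h2, List.getD_eq_getElem _ _ (by omega)] at this

lemma invL_eq_zero {l : List ℕ} (h : List.Pairwise (· ≤ ·) l) : invL l = 0 := by
  induction l with
  | nil => rfl
  | cons a l ih =>
    rw [List.pairwise_cons] at h
    have hc : l.countP (fun b => decide (b < a)) = 0 := by
      rw [List.countP_eq_zero]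
      intro b hb
      simp only [decide_eq_true_iff]
      exact not_lt.2 (h.1 b hb)
    simp [invL, hc, ih h.2]

lemma countP_lt_getElem {L : List ℕ} (h : List.Pairwise (· < ·) L) :
    ∀ (i : ℕ) (hi : i < L.length), L.countP (fun b => decide (b < L[i])) = i := by
  induction L with
  | nil => intro i hi; simp at hi
  | cons a L ih =>
    intro i hi
    rw [List.pairwise_cons] at h
    cases i with
    | zero =>
      simp only [List.getElem_cons_zero, List.countP_cons]
      have hc : L.countP (fun b => decide (b < a)) = 0 := by
        rw [List.countP_eq_zero]
        intro b hb
        simp only [decide_eq_true_iff]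
        exact not_lt.2 (le_of_lt (h.1 b hb))
      simp [hc]
    | succ i =>
      simp only [List.getElem_cons_succ, List.countP_cons]
      have hi' : i < L.length := by simpa using hi
      have ha : a < L[i] := h.1 _ (List.getElem_mem hi')
      rw [ih h.2 i hi']
      simp [ha]

lemma getD_rank {L : List ℕ} {a : ℕ} (h : List.Pairwise (· < ·) L) (ha : a ∈ L) :
    L.countP (fun b => decide (b < a)) < L.length ∧
      L.getD (L.countP (fun b => decide (b < a))) 0 = a := by
  obtain ⟨i, hi, rfl⟩ := List.mem_iff_getElem.1 ha
  rw [countP_lt_getElem h i hi]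
  exact ⟨hi, List.getD_eq_getElem _ _ hi⟩

lemma sort_pairwise_le (t : List ℕ) : List.Pairwise (· ≤ ·) (t.mergeSort (· ≤ ·)) := by
  have := List.pairwise_mergeSort (le := fun a b : ℕ => decide (a ≤ b))
    (fun a b c hab hbc => by simp only [decide_eq_true_iff] at *; omega)
    (fun a b => by simp only [Bool.or_eq_true, decide_eq_true_iff]; omega) t
  exact this.imp (fun h => by simpa using h)

lemma sort_pairwise_lt {t : List ℕ} (hnd : t.Nodup) :
    List.Pairwise (· < ·) (t.mergeSort (· ≤ ·)) := by
  have h1 := sort_pairwise_le t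
  have h2 : (t.mergeSort (· ≤ ·)).Nodup := (List.mergeSort_perm t _).nodup_iff.2 hnd
  exact (h1.and h2).imp (fun ⟨hle, hne⟩ => lt_of_le_of_ne hle hne)

/-- the involution on hooks -/
def hookT (t : List ℕ) : List ℕ :=
  let L := t.mergeSort (· ≤ ·)
  let a' := L.getD (t.length - invL t) 0
  a' :: ((t.erase a').mergeSort (· ≤ ·))

lemma hookT_def (t : List ℕ) :
    hookT t = (t.mergeSort (· ≤ ·)).getD (t.length - invL t) 0 ::
      ((t.erase ((t.mergeSort (· ≤ ·)).getD (t.length - invL t) 0)).mergeSort (· ≤ ·)) := rfl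

lemma invL_cons (a : ℕ) (l : List ℕ) :
    invL (a :: l) = l.countP (fun b => decide (b < a)) + invL l := rfl

lemma hookT_spec {t : List ℕ} (ht : IsHook t) (hnd : t.Nodup) :
    IsHook (hookT t) ∧ List.Perm (hookT t) t ∧ invL (hookT t) + invL t = t.length ∧
      hookT (hookT t) = t := by
  obtain ⟨hlen, hdesc, hchain⟩ := ht
  rcases t with _ | ⟨a, u⟩
  · simp at hlen
  rcases u with _ | ⟨b, v⟩
  · simp at hlen
  simp only [List.getD_cons_succ, List.getD_cons_zero, List.tail_cons] at hdesc hchain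
  have hpu : List.Pairwise (· ≤ ·) (b :: v) :=
    (List.isChain_iff_pairwise.1 hchain).imp le_of_lt
  set k := (a :: b :: v).length with hkdef
  set r := invL (a :: b :: v) with hrdef
  have hr : r = (b :: v).countP (fun x => decide (x < a)) := by
    rw [hrdef, invL_cons, invL_eq_zero hpu, add_zero]
  set L := (a :: b :: v).mergeSort (· ≤ ·) with hLdef
  have hLperm : List.Perm L (a :: b :: v) := List.mergeSort_perm _ _
  have hLlen : L.length = k := hLperm.length_eq
  have hLle : List.Pairwise (· ≤ ·) L := sort_pairwise_le _
  have hLlt : List.Pairwise (· < ·) L := sort_pairwise_lt hnd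
  have hLnd : L.Nodup := hLperm.nodup_iff.2 hnd
  have hrt : L.countP (fun x => decide (x < a)) = r := by
    rw [hLperm.countP_eq, List.countP_cons, hr]
    simp
  have haL : a ∈ L := hLperm.mem_iff.2 (by simp)
  obtain ⟨hrlt, hrget⟩ := getD_rank hLlt haL
  rw [hrt] at hrlt hrget
  have hr1 : 1 ≤ r := by
    rw [hr]
    have : 0 < (b :: v).countP (fun x => decide (x < a)) :=
      List.countP_pos_iff.2 ⟨b, by simp, by simpa using hdesc⟩
    omega
  have hk2 : 2 ≤ k := hlen
  have hrk : r < k := by omega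
  set a' := L.getD (k - r) 0 with ha'def
  have hmlt : k - r < L.length := by omega
  have ha'elem : a' = L[k - r] := List.getD_eq_getElem _ _ hmlt
  have ha'mem : a' ∈ L := by rw [ha'elem]; exact List.getElem_mem _
  have ha't : a' ∈ (a :: b :: v) := hLperm.mem_iff.1 ha'mem
  have hcnt' : L.countP (fun x => decide (x < a')) = k - r := by
    have := countP_lt_getElem hLlt (k - r) hmlt
    rwa [← ha'elem] at this
  set E := ((a :: b :: v).erase a').mergeSort (· ≤ ·) with hEdef
  have hunfold : hookT (a :: b :: v) = a' :: E := rfl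
  have hEperm : List.Perm E ((a :: b :: v).erase a') := List.mergeSort_perm _ _
  have hEcons : List.Perm (a :: b :: v) (a' :: (a :: b :: v).erase a') :=
    List.perm_cons_erase ha't
  have hperm : List.Perm (hookT (a :: b :: v)) (a :: b :: v) := by
    rw [hunfold]; exact (hEperm.cons a').trans hEcons.symm
  have hElt : List.Pairwise (· < ·) E := sort_pairwise_lt (hnd.erase a')
  have hEle : List.Pairwise (· ≤ ·) E := hElt.imp le_of_lt
  have hcntE : E.countP (fun x => decide (x < a')) = k - r := by
    rw [hEperm.countP_eq]
    have h1 : (a :: b :: v).countP (fun x => decide (x < a')) =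
        ((a :: b :: v).erase a').countP (fun x => decide (x < a')) := by
      rw [hEcons.countP_eq, List.countP_cons]; simp
    rw [← h1, ← hLperm.countP_eq, hcnt']
  have hinv' : invL (hookT (a :: b :: v)) = k - r := by
    rw [hunfold, invL_cons, invL_eq_zero hEle, add_zero, hcntE]
  have hElen : E.length = k - 1 := by
    rw [hEperm.length_eq, List.length_erase_of_mem ha't]
  rcases hEc : E with _ | ⟨e0, E'⟩
  · rw [hEc] at hElen; simp at hElen; omega
  have hL0 : L[0]'(by omega) < a' := by
    rw [ha'elem]
    exact List.pairwise_iff_get.1 hLlt ⟨0, by omega⟩ ⟨k - r, hmlt⟩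
      (Fin.mk_lt_mk.2 (by omega))
  have hne0 : L[0]'(by omega) ≠ a' := by
    rw [ha'elem]
    intro e
    have := hLnd.getElem_inj_iff.1 e
    omega
  have hL0E : L[0]'(by omega) ∈ E := by
    rw [hEperm.mem_iff, List.mem_erase_of_ne hne0]
    exact hLperm.mem_iff.1 (List.getElem_mem _)
  have he0 : e0 < a' := by
    rw [hEc] at hL0E
    rcases List.mem_cons.1 hL0E with h | h
    · rw [← h]; exact hL0
    · have : e0 < L[0]'(by omega) := by
        rw [hEc] at hElt
        exact (List.pairwise_cons.1 hElt).1 _ h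
      omega
  have hhook' : IsHook (hookT (a :: b :: v)) := by
    refine ⟨by rw [hperm.length_eq]; exact hk2, ?_, ?_⟩
    · rw [hunfold, hEc]
      simpa using he0
    · rw [hunfold, List.tail_cons]
      exact List.isChain_iff_pairwise.2 hElt
  refine ⟨hhook', hperm, by rw [hinv']; omega, ?_⟩
  have hperm2 : List.Perm (a' :: E) (a :: b :: v) := hunfold ▸ hperm
  have hsort2 : ((a' :: E).mergeSort (· ≤ ·)) = L :=
    List.Perm.eq_of_pairwise' (sort_pairwise_le _) hLle
      ((List.mergeSort_perm _ _).trans (hperm2.trans hLperm.symm))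
  have hlen2 : (a' :: E).length = k := hperm2.length_eq
  have hinv2 : invL (a' :: E) = k - r := by rw [← hunfold]; exact hinv'
  rw [hunfold, hookT_def, hsort2, hlen2, hinv2]
  have hkr2 : k - (k - r) = r := by omega
  rw [hkr2, hrget]
  have herase : ((a' :: E).erase a).mergeSort (· ≤ ·) = b :: v := by
    refine List.Perm.eq_of_pairwise' (sort_pairwise_le _) hpu ?_
    refine (List.mergeSort_perm _ _).trans ?_
    have h2 := hperm2.erase a
    rwa [List.erase_cons_head] at h2
  rw [herase]

lemma invL_append (x y : List ℕ) :
    invL (x ++ y) = invL x + invL y +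
      (x.map (fun a => y.countP (fun b => decide (b < a)))).sum := by
  induction x with
  | nil => simp [invL]
  | cons a x ih =>
    simp only [List.cons_append, invL_cons, List.countP_append, ih, List.map_cons,
      List.sum_cons]
    omega

lemma cross_congr {x x' y y' : List ℕ} (hx : List.Perm x x') (hy : List.Perm y y') :
    (x.map (fun a => y.countP (fun b => decide (b < a)))).sum =
      (x'.map (fun a => y'.countP (fun b => decide (b < a)))).sum := by
  have h1 : (x.map (fun a => y.countP (fun b => decide (b < a)))) =
      (x.map (fun a => y'.countP (fun b => decide (b < a)))) :=
    List.map_congr_left (fun a _ => hy.countP_eq _)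
  rw [h1]
  exact (hx.map _).sum_eq

lemma flatten_perm : ∀ {bs bs' : List (List ℕ)}, List.Forall₂ (fun s t => List.Perm s t) bs bs' →
    List.Perm bs.flatten bs'.flatten := by
  intro bs bs' h
  induction h with
  | nil => simp
  | cons hbb _ ih => simpa using hbb.append ih

lemma invL_flatten_congr : ∀ {bs bs' : List (List ℕ)},
    List.Forall₂ (fun s t => List.Perm s t) bs bs' →
    invL bs.flatten + (bs'.map invL).sum = invL bs'.flatten + (bs.map invL).sum := by
  intro bs bs' h
  induction h with
  | nil => simp
  | @cons b b' bs bs' hbb hrest ih =>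
    simp only [List.flatten_cons, List.map_cons, List.sum_cons]
    rw [invL_append, invL_append]
    have hc : (b.map (fun a => bs.flatten.countP (fun x => decide (x < a)))).sum =
        (b'.map (fun a => bs'.flatten.countP (fun x => decide (x < a)))).sum :=
      cross_congr hbb (flatten_perm hrest)
    omega

lemma hookAux_spec : ∀ (fuel : ℕ) (w : List ℕ), w.length ≤ fuel → w.Nodup →
    (hookAux fuel w).1 ++ ((hookAux fuel w).2).flatten = w ∧
    List.Chain' (· < ·) (hookAux fuel w).1 ∧
    ∀ t ∈ (hookAux fuel w).2, IsHook t := by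
  intro fuel
  induction fuel with
  | zero =>
    intro w hw _
    rw [List.length_eq_zero_iff.1 (Nat.le_zero.1 hw)]
    exact ⟨by simp [hookAux], by simp [hookAux, List.Chain'], by simp [hookAux]⟩
  | succ fuel ih =>
    intro w hw hnd
    cases hld : lastDesc w with
    | none =>
      have hds : descSet w = [] := List.max?_eq_none_iff.1 hld
      simp only [hookAux, hld]
      exact ⟨by simp, chain'_of_no_desc hnd hds, by simp⟩
    | some i =>
      have hii : i ∈ descSet w := List.max?_mem hld
      have hmax : ∀ j ∈ descSet w, j ≤ i := (nat_max?_some_iff.1 hld).2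
      rw [mem_descSet] at hii
      obtain ⟨hi1, hi2⟩ := hii
      have htake := ih (w.take i) (by rw [List.length_take]; omega)
        ((List.take_sublist _ _).nodup hnd)
      simp only [hookAux, hld]
      refine ⟨?_, htake.2.1, ?_⟩
      · rw [List.flatten_append]
        simp only [List.flatten_cons, List.flatten_nil, List.append_nil]
        rw [← List.append_assoc, htake.1, List.take_append_drop]
      · intro t htm
        rcases List.mem_append.1 htm with h | h
        · exact htake.2.2 t h
        · have hteq : t = w.drop i := by simpa using h
          subst hteq
          have hdl : (w.drop i).length = w.length - i := List.length_drop
          refine ⟨by omega, ?_, ?_⟩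
          · rw [List.getD_eq_getElem _ _ (by omega : 1 < (w.drop i).length),
              List.getD_eq_getElem _ _ (by omega : 0 < (w.drop i).length),
              List.getElem_drop, List.getElem_drop]
            rw [List.getD_eq_getElem _ _ hi1, List.getD_eq_getElem _ _ (by omega)] at hi2
            exact hi2
          · rw [List.tail_drop]; show List.IsChain _ _; rw [List.isChain_iff_getElem]
            intro j hj
            rw [List.length_drop] at hj
            have hb : (i + 1 + j) + 1 < w.length := by omega
            have hnm : (i + 1 + j) ∉ descSet w := by
              intro hm
              have := hmax _ hm
              omega
            have hlt := lt_of_not_desc hnd hb hnm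
            rw [List.getD_eq_getElem _ _ (by omega), List.getD_eq_getElem _ _ hb] at hlt
            simp only [List.get_eq_getElem, List.getElem_drop]
            exact hlt

lemma getD_tail (l : List ℕ) (i : ℕ) : l.tail.getD i 0 = l.getD (i+1) 0 := by
  cases l <;> simp

lemma chain'_getD {l : List ℕ} (h : List.Chain' (· < ·) l) {i : ℕ}
    (hi : i + 1 < l.length) : l.getD i 0 < l.getD (i+1) 0 := by
  have := List.isChain_iff_getElem.1 h i (by omega)
  rwa [List.getD_eq_getElem _ _ (by omega), List.getD_eq_getElem _ _ hi]

lemma hookAux_unique : ∀ (ts : List (List ℕ)) (p : List ℕ) (fuel : ℕ),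
    List.Chain' (· < ·) p → (∀ t ∈ ts, IsHook t) → (p ++ ts.flatten).length ≤ fuel →
    hookAux fuel (p ++ ts.flatten) = (p, ts) := by
  intro ts
  induction ts using List.reverseRecOn with
  | nil =>
    intro p fuel hp _ hf
    simp only [List.flatten_nil, List.append_nil] at *
    have hld : lastDesc p = none := List.max?_eq_none_iff.2 (descSet_eq_nil hp)
    cases fuel with
    | zero => simp [hookAux]
    | succ fuel => simp [hookAux, hld]
  | append_singleton ts₀ t ih =>
    intro p fuel hp hts hf
    have ht : IsHook t := hts t (by simp)
    obtain ⟨htl, htd, htc⟩ := ht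
    have hw : p ++ (ts₀ ++ [t]).flatten = (p ++ ts₀.flatten) ++ t := by
      simp [List.flatten_append]
    rw [hw] at hf ⊢
    obtain ⟨q, hq⟩ : ∃ q, p ++ ts₀.flatten = q := ⟨_, rfl⟩
    rw [hq] at hf ⊢
    have hget0 : (q ++ t).getD q.length 0 = t.getD 0 0 := by
      rw [List.getD_append_right _ _ _ _ (le_refl _), Nat.sub_self]
    have hget1 : (q ++ t).getD (q.length + 1) 0 = t.getD 1 0 := by
      rw [List.getD_append_right _ _ _ _ (by omega)]
      congr 1
      omega
    have hmem : q.length ∈ descSet (q ++ t) :=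
      mem_descSet.2 ⟨by rw [List.length_append]; omega, by rw [hget0, hget1]; exact htd⟩
    have hub : ∀ j ∈ descSet (q ++ t), j ≤ q.length := by
      intro j hj
      by_contra hgt
      push_neg at hgt
      rw [mem_descSet] at hj
      obtain ⟨hj1, hj2⟩ := hj
      rw [List.length_append] at hj1
      have e1 : (q ++ t).getD j 0 = t.getD (j - q.length) 0 :=
        List.getD_append_right _ _ _ _ (by omega)
      have e2 : (q ++ t).getD (j+1) 0 = t.getD (j + 1 - q.length) 0 :=
        List.getD_append_right _ _ _ _ (by omega)
      rw [e1, e2] at hj2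
      have hch := chain'_getD htc (i := j - q.length - 1)
        (by rw [List.length_tail]; omega)
      rw [getD_tail, getD_tail] at hch
      rw [show j - q.length - 1 + 1 = j - q.length from by omega] at hch
      rw [show j - q.length + 1 = j + 1 - q.length from by omega] at hch
      omega
    have hld : lastDesc (q ++ t) = some q.length := nat_max?_some_iff.2 ⟨hmem, hub⟩
    cases fuel with
    | zero =>
      exfalso
      rw [List.length_append] at hf
      omega
    | succ fuel =>
      have hih : hookAux fuel q = (p, ts₀) := by
        rw [← hq]
        exact ih p fuel hp (fun t' ht' => hts t' (by simp [ht']))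
          (by rw [hq]; rw [List.length_append] at hf; omega)
      simp only [hookAux, hld]
      rw [List.take_left' rfl, List.drop_left' rfl, hih]

/-- the word-level involution -/
def Tw (w : List ℕ) : List ℕ :=
  (hookFact w).1 ++ ((hookFact w).2.map hookT).flatten

lemma sum_invL_hookT : ∀ (ts : List (List ℕ)),
    (∀ t ∈ ts, invL (hookT t) + invL t = t.length) →
    (ts.map invL).sum + ((ts.map hookT).map invL).sum = (ts.map List.length).sum := by
  intro ts h
  induction ts with
  | nil => simp
  | cons t ts ih =>
    simp only [List.map_cons, List.sum_cons]
    have h1 := h t (by simp)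
    have h2 := ih (fun t' ht' => h t' (by simp [ht']))
    omega

lemma Tw_spec {w : List ℕ} (hnd : w.Nodup) :
    List.Perm (Tw w) w ∧
    pixL (Tw w) = pixL w ∧
    Tw (Tw w) = w ∧
    lecL w + lecL (Tw w) + pixL w = w.length ∧
    invL (Tw w) + lecL w = invL w + lecL (Tw w) := by
  obtain ⟨hjoin, hinc, hhooks⟩ := hookAux_spec w.length w (le_refl _) hnd
  have hfw : hookAux w.length w = hookFact w := rfl
  rw [hfw] at hjoin hinc hhooks
  set p := (hookFact w).1 with hp
  set ts := (hookFact w).2 with hts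
  have hndt : ∀ t ∈ ts, t.Nodup := by
    intro t htm
    have h1 : ts.flatten.Nodup := by
      have h2 : ts.flatten.Sublist w := by
        rw [← hjoin]; exact List.sublist_append_right _ _
      exact h2.nodup hnd
    exact (List.sublist_flatten_of_mem htm).nodup h1
  have hspec : ∀ t ∈ ts, IsHook (hookT t) ∧ List.Perm (hookT t) t ∧
      invL (hookT t) + invL t = t.length ∧ hookT (hookT t) = t :=
    fun t htm => hookT_spec (hhooks t htm) (hndt t htm)
  have hTw : Tw w = p ++ (ts.map hookT).flatten := rfl
  have F : List.Forall₂ (fun s t => List.Perm s t) (ts.map hookT) ts := by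
    rw [List.forall₂_map_left_iff]
    exact List.forall₂_same.2 (fun t htm => (hspec t htm).2.1)
  have F' : List.Forall₂ (fun s t => List.Perm s t) ts (ts.map hookT) := by
    rw [List.forall₂_map_right_iff]
    exact List.forall₂_same.2 (fun t htm => (hspec t htm).2.1.symm)
  have hflat : List.Perm (ts.map hookT).flatten ts.flatten := flatten_perm F
  have hperm : List.Perm (Tw w) w := by
    rw [hTw, ← hjoin]
    exact hflat.append_left p
  have hfact : hookFact (Tw w) = (p, ts.map hookT) := by
    have h0 : hookFact (Tw w) = hookAux (Tw w).length (Tw w) := rfl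
    rw [h0, hTw]
    exact hookAux_unique (ts.map hookT) p _ hinc
      (by intro t' ht'
          obtain ⟨t, htm, rfl⟩ := List.mem_map.1 ht'
          exact (hspec t htm).1)
      (le_refl _)
  have hpix : pixL (Tw w) = pixL w := by rw [pixL, hfact]; rfl
  have hTT : Tw (Tw w) = w := by
    rw [Tw, hfact]
    have h3 : (ts.map hookT).map hookT = ts := by
      rw [List.map_map]
      simp only [Function.comp_def]
      rw [List.map_congr_left (fun t htm => ((hspec t htm).2.2.2 : (hookT ∘ hookT) t = id t))]
      simp
    simp only [h3, hjoin]
  have hlec : lecL w = (ts.map invL).sum := rfl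
  have hlec' : lecL (Tw w) = ((ts.map hookT).map invL).sum := by rw [lecL, hfact]
  have hlsum := sum_invL_hookT ts (fun t htm => (hspec t htm).2.2.1)
  have hwlen : w.length = p.length + (ts.map List.length).sum := by
    rw [← hjoin, List.length_append, List.length_flatten]
  have hpixw : pixL w = p.length := rfl
  refine ⟨hperm, hpix, hTT, by omega, ?_⟩
  have F2 : List.Forall₂ (fun s t => List.Perm s t) (p :: ts) (p :: ts.map hookT) :=
    List.Forall₂.cons (List.Perm.refl p) F'
  have hfc := invL_flatten_congr F2
  simp only [List.flatten_cons, List.map_cons, List.sum_cons] at hfc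
  rw [hjoin] at hfc
  rw [← hTw] at hfc
  have hip : invL p = 0 :=
    invL_eq_zero ((List.isChain_iff_pairwise.1 hinc).imp le_of_lt)
  omega

lemma word_length {n : ℕ} (π : Equiv.Perm (Fin n)) : (word π).length = n := by
  simp [word]

lemma word_nodup {n : ℕ} (π : Equiv.Perm (Fin n)) : (word π).Nodup := by
  rw [word, List.nodup_ofFn]
  intro i j h
  simp only [add_left_inj] at h
  exact π.injective (Fin.val_injective h)

lemma word_mem {n : ℕ} (π : Equiv.Perm (Fin n)) {x : ℕ} (hx : x ∈ word π) :
    1 ≤ x ∧ x ≤ n := by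
  rw [word, List.mem_ofFn] at hx
  obtain ⟨i, rfl⟩ := hx
  have := (π i).isLt
  show 1 ≤ (π i : ℕ) + 1 ∧ (π i : ℕ) + 1 ≤ n
  omega

lemma Tw_word_facts {n : ℕ} (π : Equiv.Perm (Fin n)) :
    (Tw (word π)).length = n ∧ (Tw (word π)).Nodup ∧
      ∀ x ∈ Tw (word π), 1 ≤ x ∧ x ≤ n := by
  have hperm := (Tw_spec (word_nodup π)).1
  exact ⟨hperm.length_eq.trans (word_length π),
    hperm.nodup_iff.2 (word_nodup π),
    fun x hx => word_mem π (hperm.subset hx)⟩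

lemma fmap_bound {n : ℕ} (π : Equiv.Perm (Fin n)) (i : Fin n) :
    (Tw (word π)).getD i 0 - 1 < n := by
  obtain ⟨hlen, _, hmem⟩ := Tw_word_facts π
  have hi : (i : ℕ) < (Tw (word π)).length := by rw [hlen]; exact i.isLt
  rw [List.getD_eq_getElem _ _ hi]
  have := hmem _ (List.getElem_mem hi)
  omega

lemma fmap_bij {n : ℕ} (π : Equiv.Perm (Fin n)) :
    Function.Bijective (fun i : Fin n =>
      (⟨(Tw (word π)).getD i 0 - 1, fmap_bound π i⟩ : Fin n)) := by
  rw [← Finite.injective_iff_bijective]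
  intro i j h
  obtain ⟨hlen, hnd, hmem⟩ := Tw_word_facts π
  have hi : (i : ℕ) < (Tw (word π)).length := by rw [hlen]; exact i.isLt
  have hj : (j : ℕ) < (Tw (word π)).length := by rw [hlen]; exact j.isLt
  simp only [Fin.mk.injEq] at h
  rw [List.getD_eq_getElem _ _ hi, List.getD_eq_getElem _ _ hj] at h
  have h1 := hmem _ (List.getElem_mem hi)
  have h2 := hmem _ (List.getElem_mem hj)
  have : (Tw (word π))[(i : ℕ)] = (Tw (word π))[(j : ℕ)] := by omega
  exact Fin.val_injective (hnd.getElem_inj_iff.1 this)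

/-- the permutation-level involution -/
noncomputable def fmap {n : ℕ} (π : Equiv.Perm (Fin n)) : Equiv.Perm (Fin n) :=
  Equiv.ofBijective _ (fmap_bij π)

lemma word_fmap {n : ℕ} (π : Equiv.Perm (Fin n)) : word (fmap π) = Tw (word π) := by
  obtain ⟨hlen, hnd, hmem⟩ := Tw_word_facts π
  apply List.ext_getElem (by rw [word_length, hlen])
  intro k h1 h2
  rw [word_length] at h1
  have hwk : (word (fmap π))[k]'(by rw [word_length]; exact h1) =
      ((fmap π) ⟨k, h1⟩ : ℕ) + 1 := by
    simp [word, List.getElem_ofFn]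
  rw [hwk]
  have happ : ((fmap π) ⟨k, h1⟩ : ℕ) = (Tw (word π)).getD k 0 - 1 := rfl
  rw [happ, List.getD_eq_getElem _ _ h2]
  have := hmem _ (List.getElem_mem h2)
  omega

lemma word_injective {n : ℕ} {π σ : Equiv.Perm (Fin n)} (h : word π = word σ) : π = σ := by
  apply Equiv.ext
  intro i
  have h1 : (word π)[(i : ℕ)]'(by rw [word_length]; exact i.isLt) =
      (word σ)[(i : ℕ)]'(by rw [word_length]; exact i.isLt) := List.getElem_of_eq h _
  simp only [word, List.getElem_ofFn] at h1
  simp only [add_left_inj] at h1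
  exact Fin.val_injective h1

/-- There is an involution on permutations of `[n]` with `pix = j` complementing `lec`
and preserving `inv - lec`. -/
theorem involution_on_pix_eq (n j : ℕ) :
    ∃ f : Equiv.Perm (Fin n) → Equiv.Perm (Fin n),
      ∀ π : Equiv.Perm (Fin n), pix π = j →
        pix (f π) = j ∧ f (f π) = π ∧
        lec (f π) = n - j - lec π ∧
        inv (f π) - lec (f π) = inv π - lec π := by
  refine ⟨fmap, ?_⟩
  intro π hpixj
  obtain ⟨hperm, hpix, hTT, hlecsum, hinveq⟩ := Tw_spec (word_nodup π)
  have hw : word (fmap π) = Tw (word π) := word_fmap π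
  have hpj : pixL (word π) = j := hpixj
  have hln : (word π).length = n := word_length π
  refine ⟨?_, ?_, ?_, ?_⟩
  · show pixL (word (fmap π)) = j
    rw [hw, hpix]
    exact hpj
  · apply word_injective
    rw [word_fmap, hw, hTT]
  · show lecL (word (fmap π)) = n - j - lecL (word π)
    rw [hw]
    omega
  · show invL (word (fmap π)) - lecL (word (fmap π)) = invL (word π) - lecL (word π)
    rw [hw]
    omega

end QEuler
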